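/- arXiv:1403.0713 — 2 statements merged into one kernel-verified Lean document; each statement's English description precedes it below -/
import Mathlib

section
/- The four polynomials f₂ = x₁²+x₂²+x₃²+x₄², f₄ = x₁⁴+x₂⁴+x₃⁴+x₄⁴, g₄ = x₁x₂x₃x₄, and f₆ = x₁⁶+x₂⁶+x₃⁶+x₄⁶ in ℂ[x₁,x₂,x₃,x₄] are algebraically independent over ℂ. -/
open MvPolynomial

/-- The `d`-th power sum `x₁^d + x₂^d + x₃^d + x₄^d`. -/
noncomputable def f (d : ℕ) : MvPolynomial (Fin 4) ℂ := ∑ i : Fin 4, X i ^ d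

/-- The product `g₄ = x₁x₂x₃x₄`. -/
noncomputable def g₄ : MvPolynomial (Fin 4) ℂ := ∏ i : Fin 4, X i

section Aux


private lemma coeff_comp_negX {S : Type*} [CommRing S] (p : Polynomial S) (n : ℕ) :
    (p.comp (-Polynomial.X)).coeff n = (-1)^n * p.coeff n := by
  induction p using Polynomial.induction_on' with
  | add p q hp hq => simp [Polynomial.add_comp, hp, hq, mul_add]
  | monomial k a =>
    rw [show (Polynomial.monomial k a).comp (-Polynomial.X) = Polynomial.C a * (-Polynomial.X)^k from by
      simp [Polynomial.comp, Polynomial.eval₂_monomial]]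
    rw [neg_pow, show (((-1 : Polynomial S))^k * Polynomial.X^k) = Polynomial.C ((-1)^k) * Polynomial.X^k from by simp, ← mul_assoc,
      ← Polynomial.C_mul, Polynomial.coeff_C_mul, Polynomial.coeff_X_pow, Polynomial.coeff_monomial]
    by_cases h : n = k
    · simp [h, mul_comm]
    · rw [if_neg h, if_neg (fun hh : k = n => h hh.symm)]; ring

private lemma transcendental_of_sq {S A : Type*} [CommRing S] [IsDomain S] [CharZero S]
    [CommRing A] [Algebra S A] {c : A} (h : Transcendental S (c^2)) : Transcendental S c := by
  intro hc
  apply h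
  obtain ⟨p, hp0, hpc⟩ := hc
  set q : Polynomial S := p * p.comp (-Polynomial.X) with hq
  have hq0 : q ≠ 0 := by
    refine mul_ne_zero hp0 fun hcon => hp0 ?_
    have := congrArg (fun r : Polynomial S => r.comp (-Polynomial.X)) hcon
    simpa [Polynomial.comp_neg_X_comp_neg_X] using this
  have heven : ∀ n, ¬ (2 ∣ n) → q.coeff n = 0 := by
    intro n hn
    have h1 : q.comp (-Polynomial.X) = q := by
      rw [hq, Polynomial.mul_comp, Polynomial.comp_neg_X_comp_neg_X, mul_comm]
    have h2 := coeff_comp_negX q n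
    rw [h1] at h2
    have hodd : Odd n := Nat.odd_iff.mpr (by omega)
    rw [hodd.neg_one_pow, neg_one_mul] at h2
    have : (2 : S) * q.coeff n = 0 := by linear_combination h2
    rcases mul_eq_zero.mp this with h' | h'
    · exact absurd h' two_ne_zero
    · exact h'
  have hexp : Polynomial.expand S 2 (Polynomial.contract 2 q) = q := by
    ext n
    rw [Polynomial.coeff_expand (by norm_num)]
    split_ifs with hd
    · rw [Polynomial.coeff_contract (by norm_num), Nat.div_mul_cancel hd]
    · exact (heven n hd).symm
  refine ⟨Polynomial.contract 2 q, fun hcon => hq0 ?_, ?_⟩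
  · rw [← hexp, hcon, map_zero]
  · have := congrArg (Polynomial.aeval c) hexp
    rw [Polynomial.expand_aeval] at this
    rw [this, hq, map_mul, hpc, zero_mul]

private lemma esymm1 : esymm (Fin 4) ℂ 1 = X 0 + X 1 + X 2 + X 3 := by
  rw [esymm_one, Fin.sum_univ_four]

private lemma esymm2 : esymm (Fin 4) ℂ 2 =
    X 0*X 1 + X 0*X 2 + X 0*X 3 + X 1*X 2 + X 1*X 3 + X 2*X 3 := by
  rw [esymm, show Finset.powersetCard 2 (Finset.univ : Finset (Fin 4)) =
    {{0,1},{0,2},{0,3},{1,2},{1,3},{2,3}} from by decide]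
  repeat rw [Finset.sum_insert (by decide)]
  rw [Finset.sum_singleton]
  repeat rw [Finset.prod_insert (by decide)]
  repeat rw [Finset.prod_singleton]
  ring

private lemma esymm3 : esymm (Fin 4) ℂ 3 =
    X 0*X 1*X 2 + X 0*X 1*X 3 + X 0*X 2*X 3 + X 1*X 2*X 3 := by
  rw [esymm, show Finset.powersetCard 3 (Finset.univ : Finset (Fin 4)) =
    {{0,1,2},{0,1,3},{0,2,3},{1,2,3}} from by decide]
  repeat rw [Finset.sum_insert (by decide)]
  rw [Finset.sum_singleton]
  repeat rw [Finset.prod_insert (by decide)]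
  repeat rw [Finset.prod_singleton]
  ring

private lemma esymm4 : esymm (Fin 4) ℂ 4 = X 0*X 1*X 2*X 3 := by
  rw [esymm, show Finset.powersetCard 4 (Finset.univ : Finset (Fin 4)) =
    {{0,1,2,3}} from by decide]
  rw [Finset.sum_singleton]
  repeat rw [Finset.prod_insert (by decide)]
  rw [Finset.prod_singleton]
  ring

-- algebraic independence of the first four elementary symmetric polynomials
private lemma hE : AlgebraicIndependent ℂ (fun i : Fin 4 => esymm (Fin 4) ℂ ((i : ℕ) + 1)) := by
  have hinj := esymmAlgHom_injective (σ := Fin 4) (R := ℂ) (n := 4) (by simp)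
  rw [AlgebraicIndependent]
  intro p q hpq
  exact hinj (Subtype.ext (by rwa [esymmAlgHom_apply, esymmAlgHom_apply]))

private lemma hP : AlgebraicIndependent ℂ ![f 1, f 2, g₄, f 3] := by
  classical
  have e22 : (C (2:ℂ) : MvPolynomial (Fin 4) ℂ) * C (2⁻¹:ℂ) = 1 := by
    rw [← C_mul, ← C_1]; norm_num
  have e33 : (C (3:ℂ) : MvPolynomial (Fin 4) ℂ) * C (3⁻¹:ℂ) = 1 := by
    rw [← C_mul, ← C_1]; norm_num
  have e36 : (C (3:ℂ) : MvPolynomial (Fin 4) ℂ) * C (6⁻¹:ℂ) = C (2⁻¹:ℂ) := by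
    rw [← C_mul]; norm_num
  have e32 : (C (3:ℂ) : MvPolynomial (Fin 4) ℂ) * C (2⁻¹:ℂ) = 1 + C (2⁻¹:ℂ) := by
    rw [← C_mul, ← C_1, ← C_add]; norm_num
  have hC2 : (C (2:ℂ) : MvPolynomial (Fin 4) ℂ) = 2 := map_ofNat (C : ℂ →+* _) 2
  have hC3 : (C (3:ℂ) : MvPolynomial (Fin 4) ℂ) = 3 := map_ofNat (C : ℂ →+* _) 3
  set G : Fin 4 → MvPolynomial (Fin 4) ℂ :=
    ![X 0, X 0^2 - C (2:ℂ)*X 1, X 3, X 0^3 - C (3:ℂ)*(X 0*X 1) + C (3:ℂ)*X 2] with hGdef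
  have hG : AlgebraicIndependent ℂ G := by
    set h : MvPolynomial (Fin 4) ℂ →ₐ[ℂ] MvPolynomial (Fin 4) ℂ :=
      aeval ![X 0, C (2⁻¹:ℂ) * (X 0^2 - X 1),
        C (3⁻¹:ℂ)*X 3 + C (6⁻¹:ℂ)*X 0^3 - C (2⁻¹:ℂ)*(X 0*X 1), X 2] with hhdef
    apply AlgebraicIndependent.of_comp h
    have hcg : h ∘ G = X := by
      funext i
      fin_cases i
      · simp [hGdef, hhdef]
      · simp [hGdef, hhdef, algebraMap_eq]
        linear_combination (X 1 - X 0^2 : MvPolynomial (Fin 4) ℂ) * e22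
      · simp [hGdef, hhdef]
      · simp [hGdef, hhdef, algebraMap_eq]
        linear_combination (X 3 : MvPolynomial (Fin 4) ℂ) * e33
          + (X 0^3 : MvPolynomial (Fin 4) ℂ) * e36
          - (X 0^3 : MvPolynomial (Fin 4) ℂ) * e32
    rw [hcg]
    exact MvPolynomial.algebraicIndependent_X _ _
  have key := hE.aeval_of_algebraicIndependent hG
  have hfin : (fun i => aeval (fun i : Fin 4 => esymm (Fin 4) ℂ ((i : ℕ) + 1)) (G i))
      = ![f 1, f 2, g₄, f 3] := by
    funext i
    fin_cases i
    · simp [hGdef, esymm1, f, Fin.sum_univ_four]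
    · simp [hGdef, algebraMap_eq]
      rw [esymm2, hC2, f, Fin.sum_univ_four, Fin.sum_univ_four]
      ring
    · simp [hGdef]
      rw [esymm4, g₄, Fin.prod_univ_four]
    · simp [hGdef, algebraMap_eq]
      rw [esymm2, esymm3, hC3, f, Fin.sum_univ_four, Fin.sum_univ_four]
      ring
  rwa [hfin] at key

end Aux

/-- The polynomials `f₂, f₄, g₄, f₆` in `ℂ[x₁,x₂,x₃,x₄]` are algebraically independent
over `ℂ`. -/
theorem statement6 : AlgebraicIndependent ℂ ![f 2, f 4, g₄, f 6] := by
  classical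
  -- the squaring substitution X i ↦ (X i)^2 is injective
  have hsqfam : AlgebraicIndependent ℂ (fun i : Fin 4 => (X i : MvPolynomial (Fin 4) ℂ)^2) := by
    have := (MvPolynomial.algebraicIndependent_X (Fin 4) ℂ).polynomial_aeval_of_transcendental
      (f := fun _ => (Polynomial.X : Polynomial ℂ)^2)
      (fun i => (Polynomial.transcendental_X ℂ).pow two_pos)
    simpa using this
  set sq : MvPolynomial (Fin 4) ℂ →ₐ[ℂ] MvPolynomial (Fin 4) ℂ :=
    aeval (fun i : Fin 4 => (X i : MvPolynomial (Fin 4) ℂ)^2) with hsqdef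
  have hsqinj : Function.Injective sq := hsqfam
  -- independence of ![f 2, f 4, g₄^2, f 6]
  have h4sq : AlgebraicIndependent ℂ ![f 2, f 4, g₄^2, f 6] := by
    have hmap := hP.map' (f := sq) hsqinj
    have : sq ∘ ![f 1, f 2, g₄, f 3] = ![f 2, f 4, g₄^2, f 6] := by
      funext i
      fin_cases i
      · show sq (f 1) = f 2
        simp only [hsqdef, f, map_sum, map_pow, aeval_X, ← pow_mul, pow_one]
      · show sq (f 2) = f 4
        simp only [hsqdef, f, map_sum, map_pow, aeval_X, ← pow_mul]
      · show sq g₄ = g₄^2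
        simp only [hsqdef, g₄, map_prod, aeval_X]
        rw [← Finset.prod_pow]
      · show sq (f 3) = f 6
        simp only [hsqdef, f, map_sum, map_pow, aeval_X, ← pow_mul]
    rwa [this] at hmap
  -- transfer along Option (Fin 3) ≃ Fin 4
  set u : Fin 3 → MvPolynomial (Fin 4) ℂ := ![f 2, f 4, f 6] with hudef
  have hu : AlgebraicIndependent ℂ u := by
    have := h4sq.comp ![0, 1, 3] (by decide)
    have he : ![f 2, f 4, g₄^2, f 6] ∘ ![0, 1, 3] = u := by
      funext i; fin_cases i <;> rfl
    rwa [he] at this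
  set e : Option (Fin 3) ≃ Fin 4 :=
    { toFun := fun o => o.elim 2 ![0, 1, 3]
      invFun := ![some 0, some 1, none, some 2]
      left_inv := by decide
      right_inv := by decide } with hedef
  have hce2 : ![f 2, f 4, g₄^2, f 6] ∘ e = (fun o : Option (Fin 3) => o.elim (g₄^2) u) := by
    funext o
    rcases o with _ | i
    · rfl
    · fin_cases i <;> rfl
  have hce : ![f 2, f 4, g₄, f 6] ∘ e = (fun o : Option (Fin 3) => o.elim g₄ u) := by
    funext o
    rcases o with _ | i
    · rfl
    · fin_cases i <;> rfl
  have htr2 : Transcendental (Algebra.adjoin ℂ (Set.range u)) (g₄^2) :=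
    (hu.option_iff_transcendental (g₄^2)).1 ((algebraicIndependent_equiv' e hce2).2 h4sq)
  have htr : Transcendental (Algebra.adjoin ℂ (Set.range u)) g₄ :=
    transcendental_of_sq htr2
  exact (algebraicIndependent_equiv' e hce).1 ((hu.option_iff_transcendental g₄).2 htr)
end

section
/- Let P : M₄(ℂ) → ℂ be a polynomial function of the 16 matrix entries such that P(gXgᵀ) = P(X) for every symmetric matrix X ∈ M₄(ℂ) (Xᵀ = X) and every g ∈ SO₄(ℂ). Then there exists a polynomial Q in four variables with complex coefficients such that P(X) = Q(tr X, tr X², tr X³, tr X⁴) for every symmetric X ∈ M₄(ℂ). In other words, the invariant ring of the action g·X = gXgᵀ of SO₄(ℂ) on symmetric 4×4 complex matrices is generated by tr X, tr X², tr X³ and tr X⁴. -/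
open Matrix

namespace St10
open MvPolynomial Polynomial
noncomputable section

abbrev Mat := Matrix (Fin 4) (Fin 4) ℂ

/-! ### evaluation plumbing -/

lemma aeval_eq_eval' {σ : Type*} (x : σ → ℂ) (p : MvPolynomial σ ℂ) :
    MvPolynomial.aeval x p = MvPolynomial.eval x p := by
  rw [← MvPolynomial.coe_aeval_eq_eval]; rfl

lemma eval_aeval' {σ τ : Type*} (x : σ → ℂ) (f : τ → MvPolynomial σ ℂ)
    (p : MvPolynomial τ ℂ) :
    MvPolynomial.eval x (MvPolynomial.aeval f p)
      = MvPolynomial.eval (fun i => MvPolynomial.eval x (f i)) p := by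
  rw [← aeval_eq_eval', ← AlgHom.comp_apply, MvPolynomial.comp_aeval]
  simp only [aeval_eq_eval']

lemma eval_congr' {σ : Type*} {f g : σ → ℂ} (p : MvPolynomial σ ℂ)
    (h : ∀ i, f i = g i) : MvPolynomial.eval f p = MvPolynomial.eval g p := by
  rw [show f = g from funext h]

/-! ### orthogonal diagonalization -/

lemma eig_orth {M : Mat} (hM : Mᵀ = M) {a b : ℂ} {v w : Fin 4 → ℂ}
    (hv : M.mulVec v = a • v) (hw : M.mulVec w = b • w) (hab : a ≠ b) :
    v ⬝ᵥ w = 0 := by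
  have h1 : v ⬝ᵥ M.mulVec w = M.vecMul v ⬝ᵥ w := dotProduct_mulVec v M w
  have h2 : M.vecMul v = a • v := by rw [← hM, vecMul_transpose, hv]
  rw [hw, h2, dotProduct_smul, smul_dotProduct] at h1
  have h3 := sub_eq_zero.mpr h1
  rw [← sub_smul] at h3
  rcases smul_eq_zero.mp h3 with h | h
  · exact absurd (sub_eq_zero.mp h).symm hab
  · exact h

lemma fix_sign (g : Mat) (hgtg : gᵀ * g = 1) (hdet2 : g.det * g.det = 1) :
    ∃ g' : Mat, g'ᵀ * g' = 1 ∧ g'.det = 1 ∧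
      ∀ d : Fin 4 → ℂ, g' * diagonal d * g'ᵀ = g * diagonal d * gᵀ := by
  rcases mul_self_eq_one_iff.mp hdet2 with hdet | hdet
  · exact ⟨g, hgtg, hdet, fun d => rfl⟩
  · set s : Fin 4 → ℂ := ![-1, 1, 1, 1] with hsdef
    have hss : ∀ i, s i * s i = 1 := by
      intro i; fin_cases i <;> norm_num [hsdef]
    have hdiags : diagonal s * diagonal s = 1 := by
      rw [diagonal_mul_diagonal]
      have h : (fun i => s i * s i) = fun _ => (1 : ℂ) := funext hss
      rw [h, diagonal_one]
    have hdst : (diagonal s)ᵀ = diagonal s := diagonal_transpose s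
    refine ⟨g * diagonal s, ?_, ?_, ?_⟩
    · rw [transpose_mul, hdst, mul_assoc (diagonal s) gᵀ, ← mul_assoc gᵀ, hgtg, one_mul, hdiags]
    · rw [det_mul, hdet, det_diagonal]
      simp [hsdef, Fin.prod_univ_four]
    · intro d
      have hDL : diagonal s * diagonal d * diagonal s = diagonal d := by
        rw [diagonal_mul_diagonal, diagonal_mul_diagonal]
        have h : (fun i => s i * d i * s i) = d := funext fun i => by
          rw [mul_comm (s i) (d i), mul_assoc, hss i, mul_one]
        rw [h]
      rw [transpose_mul, hdst]
      conv_rhs => rw [← hDL]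
      simp only [mul_assoc]

lemma diag_of_symm {M : Mat} (hM : Mᵀ = M) (lam : Fin 4 → ℂ)
    (hinj : Function.Injective lam)
    (heig : ∀ i, ((lam i) • (1 : Mat) - M).det = 0) :
    ∃ g : Mat, gᵀ * g = 1 ∧ g.det = 1 ∧ M = g * diagonal lam * gᵀ := by
  have hv : ∀ i, ∃ v : Fin 4 → ℂ, v ≠ 0 ∧ M.mulVec v = lam i • v := by
    intro i
    obtain ⟨v, hv0, hveq⟩ := Matrix.exists_mulVec_eq_zero_iff.mpr (heig i)
    rw [sub_mulVec, smul_mulVec, one_mulVec, sub_eq_zero] at hveq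
    exact ⟨v, hv0, hveq.symm⟩
  choose v hv0 hveig using hv
  have hli : LinearIndependent ℂ v := by
    apply Module.End.eigenvectors_linearIndependent' (Matrix.mulVecLin M) lam hinj
    intro i
    constructor
    · rw [Module.End.mem_eigenspace_iff]
      simpa using hveig i
    · exact hv0 i
  obtain ⟨hB, hBcoe⟩ : ∃ B : Module.Basis (Fin 4) ℂ (Fin 4 → ℂ), ∀ i, B i = v i :=
    ⟨basisOfLinearIndependentOfCardEqFinrank hli (by simp),
     fun i => congrFun (coe_basisOfLinearIndependentOfCardEqFinrank hli (by simp)) i⟩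
  have horth : ∀ i j, i ≠ j → v i ⬝ᵥ v j = 0 := fun i j hij =>
    eig_orth hM (hveig i) (hveig j) (fun h => hij (hinj h))
  have hself : ∀ i, v i ⬝ᵥ v i ≠ 0 := by
    intro i hzero
    have hall : ∀ w : Fin 4 → ℂ, v i ⬝ᵥ w = 0 := by
      intro w
      have hw : ∑ j, hB.repr w j • hB j = w := hB.sum_repr w
      have hsum : v i ⬝ᵥ w = ∑ j, hB.repr w j * (v i ⬝ᵥ hB j) := by
        conv_lhs => rw [← hw]
        simp only [dotProduct, Finset.sum_apply, Pi.smul_apply, smul_eq_mul, Finset.mul_sum]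
        rw [Finset.sum_comm]
        exact Finset.sum_congr rfl fun j _ => Finset.sum_congr rfl fun k _ => by ring
      rw [hsum]
      refine Finset.sum_eq_zero fun j _ => ?_
      rw [hBcoe]
      rcases eq_or_ne i j with rfl | hij
      · rw [hzero, mul_zero]
      · rw [horth i j hij, mul_zero]
    apply hv0 i
    funext k
    simpa using hall (Pi.single k 1)
  have hc : ∀ i, ∃ c : ℂ, c ^ 2 = v i ⬝ᵥ v i := fun i =>
    IsAlgClosed.exists_pow_nat_eq _ zero_lt_two
  choose c hc using hc
  have hc0 : ∀ i, c i ≠ 0 := by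
    intro i h
    apply hself i
    rw [← hc i, h]; ring
  set w : Fin 4 → Fin 4 → ℂ := fun i => (c i)⁻¹ • v i with hwdef
  have hwdot : ∀ i j, w i ⬝ᵥ w j = if i = j then 1 else 0 := by
    intro i j
    rw [hwdef]
    simp only [smul_dotProduct, dotProduct_smul, smul_eq_mul]
    rcases eq_or_ne i j with rfl | hij
    · rw [if_pos rfl, ← hc i, ← mul_assoc]
      rw [show (c i)⁻¹ * (c i)⁻¹ * c i ^ 2 = ((c i)⁻¹ * c i) * ((c i)⁻¹ * c i) from by ring,
        inv_mul_cancel₀ (hc0 i), one_mul]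
    · rw [if_neg hij, horth i j hij, mul_zero, mul_zero]
  have hweig : ∀ i, M.mulVec (w i) = lam i • w i := by
    intro i
    rw [hwdef]
    simp only []
    rw [mulVec_smul, hveig i, smul_comm]
  set g : Mat := Matrix.of (fun k i => w i k) with hgdef
  have hgtg : gᵀ * g = 1 := by
    ext i j
    simp only [mul_apply, transpose_apply, hgdef, of_apply, one_apply]
    exact hwdot i j
  have hMg : M * g = g * diagonal lam := by
    ext k j
    have h1 : (M * g) k j = M.mulVec (w j) k := by
      simp [mul_apply, mulVec, dotProduct, hgdef]
    rw [h1, hweig j, mul_diagonal]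
    simp [hgdef, mul_comm]
  have hggt : g * gᵀ = 1 := mul_eq_one_comm.mp hgtg
  have hMdec : M = g * diagonal lam * gᵀ := by
    calc M = M * (g * gᵀ) := by rw [hggt, mul_one]
    _ = (M * g) * gᵀ := by rw [mul_assoc]
    _ = g * diagonal lam * gᵀ := by rw [hMg]
  have hdet2 : g.det * g.det = 1 := by
    have h := congrArg det hgtg
    rwa [det_mul, det_transpose, det_one] at h
  obtain ⟨g', h1, h2, h3⟩ := fix_sign g hgtg hdet2
  exact ⟨g', h1, h2, by rw [h3]; exact hMdec⟩

/-! ### permutation matrices -/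

lemma permMatrix_transpose (σ : Equiv.Perm (Fin 4)) :
    (σ.permMatrix ℂ)ᵀ = (σ⁻¹).permMatrix ℂ := by
  simp only [Equiv.Perm.permMatrix, ← PEquiv.toMatrix_symm, Equiv.Perm.inv_def,
    Equiv.toPEquiv_symm]

lemma permMatrix_orth (σ : Equiv.Perm (Fin 4)) :
    (σ.permMatrix ℂ)ᵀ * (σ.permMatrix ℂ) = 1 := by
  rw [permMatrix_transpose, Equiv.Perm.permMatrix, Equiv.Perm.permMatrix,
    ← PEquiv.toMatrix_trans, ← Equiv.toPEquiv_trans]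
  ext i j
  simp [PEquiv.toMatrix_apply, Equiv.toPEquiv_apply, one_apply, eq_comm]

lemma permMatrix_conj_diag (σ : Equiv.Perm (Fin 4)) (d : Fin 4 → ℂ) :
    (σ.permMatrix ℂ) * diagonal d * (σ.permMatrix ℂ)ᵀ = diagonal (d ∘ σ) := by
  rw [permMatrix_transpose, Equiv.Perm.permMatrix, Equiv.Perm.permMatrix,
    PEquiv.toMatrix_toPEquiv_mul, PEquiv.mul_toMatrix_toPEquiv]
  ext i j
  simp only [submatrix_apply, id_eq, diagonal_apply, Function.comp_apply,
    Equiv.Perm.inv_def, Equiv.symm_symm]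
  by_cases h : i = j
  · simp [h]
  · rw [if_neg (fun hc => h (σ.injective (by simpa using hc))), if_neg h]

lemma perm_exists (σ : Equiv.Perm (Fin 4)) :
    ∃ g : Mat, gᵀ * g = 1 ∧ g.det = 1 ∧
      ∀ d : Fin 4 → ℂ, g * diagonal d * gᵀ = diagonal (d ∘ σ) := by
  have h1 := permMatrix_orth σ
  have hdet2 : (σ.permMatrix ℂ).det * (σ.permMatrix ℂ).det = 1 := by
    rw [Matrix.det_permutation]
    have h : (Equiv.Perm.sign σ) * (Equiv.Perm.sign σ) = 1 := Int.units_mul_self _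
    have := congrArg (fun u : ℤˣ => ((u : ℤ) : ℂ)) h
    push_cast at this ⊢
    simpa using this
  obtain ⟨g, hg1, hg2, hg3⟩ := fix_sign _ h1 hdet2
  exact ⟨g, hg1, hg2, fun d => by rw [hg3, permMatrix_conj_diag]⟩

/-! ### symmetric polynomials: power sums generate -/

lemma esymm_mem_adjoin_psum (k : ℕ) :
    esymm (Fin 4) ℂ k ∈
      Algebra.adjoin ℂ (Set.range fun i : Fin 4 => psum (Fin 4) ℂ ((i : ℕ) + 1)) := by
  set A := Algebra.adjoin ℂ (Set.range fun i : Fin 4 => psum (Fin 4) ℂ ((i : ℕ) + 1)) with hA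
  induction k using Nat.strong_induction_on with
  | _ k ih =>
  match k with
  | 0 => rw [esymm_zero]; exact Subalgebra.one_mem A
  | (k + 1) =>
    by_cases hk4 : 4 < k + 1
    · have h0 : esymm (Fin 4) ℂ (k + 1) = 0 := by
        rw [esymm, Finset.powersetCard_eq_empty.mpr (by simpa using hk4), Finset.sum_empty]
      rw [h0]; exact Subalgebra.zero_mem A
    · have hN := mul_esymm_eq_sum (Fin 4) ℂ (k + 1)
      have hsum : ((k + 1 : ℕ) : MvPolynomial (Fin 4) ℂ) * esymm (Fin 4) ℂ (k + 1) ∈ A := by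
        rw [hN]
        refine Subalgebra.mul_mem A (Subalgebra.pow_mem A
          (Subalgebra.neg_mem A (Subalgebra.one_mem A)) _) (Subalgebra.sum_mem A ?_)
        intro a ha
        simp only [Finset.mem_filter, Finset.HasAntidiagonal.mem_antidiagonal] at ha
        obtain ⟨hsum', hlt⟩ := ha
        refine Subalgebra.mul_mem A (Subalgebra.mul_mem A (Subalgebra.pow_mem A
          (Subalgebra.neg_mem A (Subalgebra.one_mem A)) _) (ih a.1 (by omega))) ?_
        have h2' : a.2 - 1 < 4 := by omega
        refine Algebra.subset_adjoin ⟨⟨a.2 - 1, h2'⟩, ?_⟩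
        simp only [Fin.val_mk]
        congr 1
        omega
      have hcast : ((k + 1 : ℕ) : MvPolynomial (Fin 4) ℂ)
          = algebraMap ℂ _ ((k + 1 : ℕ) : ℂ) := by
        rw [map_natCast]
      have hne : ((k + 1 : ℕ) : ℂ) ≠ 0 := Nat.cast_ne_zero.mpr (Nat.succ_ne_zero k)
      have heq : esymm (Fin 4) ℂ (k + 1)
          = algebraMap ℂ _ (((k + 1 : ℕ) : ℂ)⁻¹)
            * (((k + 1 : ℕ) : MvPolynomial (Fin 4) ℂ) * esymm (Fin 4) ℂ (k + 1)) := by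
        rw [hcast, ← mul_assoc, ← _root_.map_mul, inv_mul_cancel₀ hne, _root_.map_one, one_mul]
      rw [heq]
      exact Subalgebra.mul_mem A (Subalgebra.algebraMap_mem A _) hsum

lemma symm_eq_aeval_esymm {p : MvPolynomial (Fin 4) ℂ} (hs : p.IsSymmetric) :
    ∃ Qe : MvPolynomial (Fin 4) ℂ,
      p = aeval (fun i : Fin 4 => esymm (Fin 4) ℂ ((i : ℕ) + 1)) Qe := by
  obtain ⟨Qe, hQe⟩ := esymmAlgHom_surjective (σ := Fin 4) (R := ℂ) (n := 4)
    (by simp) ⟨p, hs⟩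
  have h := congrArg Subtype.val hQe
  rw [esymmAlgHom_apply] at h
  exact ⟨Qe, h.symm⟩

lemma symm_eq_aeval_psum {p : MvPolynomial (Fin 4) ℂ} (hs : p.IsSymmetric) :
    ∃ Q : MvPolynomial (Fin 4) ℂ,
      p = aeval (fun i : Fin 4 => psum (Fin 4) ℂ ((i : ℕ) + 1)) Q := by
  obtain ⟨Qe, hQe⟩ := esymmAlgHom_surjective (σ := Fin 4) (R := ℂ) (n := 4)
    (by simp) ⟨p, hs⟩
  have hp : p = aeval (fun i : Fin 4 => esymm (Fin 4) ℂ ((i : ℕ) + 1)) Qe := by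
    have h := congrArg Subtype.val hQe
    rw [esymmAlgHom_apply] at h
    exact h.symm
  have hmem : p ∈ Algebra.adjoin ℂ
      (Set.range fun i : Fin 4 => psum (Fin 4) ℂ ((i : ℕ) + 1)) := by
    rw [hp]
    have h1 : aeval (fun i : Fin 4 => esymm (Fin 4) ℂ ((i : ℕ) + 1)) Qe ∈
        Algebra.adjoin ℂ (Set.range fun i : Fin 4 => esymm (Fin 4) ℂ ((i : ℕ) + 1)) := by
      rw [Algebra.adjoin_range_eq_range_aeval]
      exact ⟨Qe, rfl⟩
    refine Algebra.adjoin_le ?_ h1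
    rintro _ ⟨i, rfl⟩
    exact esymm_mem_adjoin_psum ((i : ℕ) + 1)
  rw [Algebra.adjoin_range_eq_range_aeval] at hmem
  obtain ⟨Q, hQ⟩ := hmem
  exact ⟨Q, hQ.symm⟩

/-! ### characteristic polynomial facts -/

lemma charmatrix_map_eval (M : Mat) (t : ℂ) :
    (charmatrix M).map (Polynomial.evalRingHom t) = t • (1 : Mat) - M := by
  ext i j
  rcases eq_or_ne i j with rfl | h
  · simp [charmatrix_apply_eq, Matrix.one_apply, Matrix.smul_apply]
  · simp [charmatrix_apply_ne _ _ _ h, Matrix.one_apply_ne h, Matrix.smul_apply]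

lemma eval_charpoly (M : Mat) (t : ℂ) :
    M.charpoly.eval t = (t • (1 : Mat) - M).det := by
  have h : M.charpoly.eval t = (Polynomial.evalRingHom t) M.charpoly := rfl
  rw [h, Matrix.charpoly, RingHom.map_det, RingHom.mapMatrix_apply, charmatrix_map_eval]

lemma charpoly_diagonal (d : Fin 4 → ℂ) :
    (diagonal d).charpoly = ∏ i, (Polynomial.X - Polynomial.C (d i)) := by
  rw [Matrix.charpoly]
  have h : charmatrix (diagonal d) = diagonal (fun i => Polynomial.X - Polynomial.C (d i)) := by
    ext i j
    rcases eq_or_ne i j with rfl | h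
    · simp [charmatrix_apply_eq]
    · simp [charmatrix_apply_ne _ _ _ h, diagonal_apply_ne _ h]
  rw [h, det_diagonal]

lemma roots_charpoly (M : Mat) :
    ∃ lam : Fin 4 → ℂ, M.charpoly.roots = Multiset.map lam Finset.univ.val := by
  have hcard : Multiset.card M.charpoly.roots = 4 := by
    have hsp : M.charpoly.Splits := IsAlgClosed.splits _
    rw [Polynomial.splits_iff_card_roots.mp hsp, Matrix.charpoly_natDegree_eq_dim]
    simp
  obtain ⟨l, hl⟩ : ∃ l : List ℂ, M.charpoly.roots = (l : Multiset ℂ) :=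
    ⟨M.charpoly.roots.toList, (Multiset.coe_toList _).symm⟩
  rw [hl] at hcard ⊢
  simp only [Multiset.coe_card] at hcard
  match l, hcard with
  | [a, b, c, d], _ =>
    refine ⟨![a, b, c, d], ?_⟩
    rfl

end
end St10

open MvPolynomial in
/-- If `P : M₄(ℂ) → ℂ` is a polynomial function of the 16 matrix entries satisfying
`P(gXgᵀ) = P(X)` for every symmetric `X` and every `g ∈ SO₄(ℂ)`, then on symmetric matrices
`P` is a polynomial in `tr X`, `tr X²`, `tr X³`, `tr X⁴`. -/
theorem statement10 (P : Matrix (Fin 4) (Fin 4) ℂ → ℂ)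
    (hpoly : ∃ q : MvPolynomial (Fin 4 × Fin 4) ℂ,
      ∀ X : Matrix (Fin 4) (Fin 4) ℂ, P X = MvPolynomial.eval (fun p => X p.1 p.2) q)
    (hinv : ∀ (X g : Matrix (Fin 4) (Fin 4) ℂ), Xᵀ = X →
      gᵀ * g = 1 → g.det = 1 → P (g * X * gᵀ) = P X) :
    ∃ Q : MvPolynomial (Fin 4) ℂ, ∀ X : Matrix (Fin 4) (Fin 4) ℂ, Xᵀ = X →
      P X = MvPolynomial.eval
        ![X.trace, (X ^ 2).trace, (X ^ 3).trace, (X ^ 4).trace] Q := by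
  classical
  obtain ⟨q, hq⟩ := hpoly
  -- the polynomial giving P on diagonal matrices
  set p₀ : MvPolynomial (Fin 4) ℂ :=
    aeval (fun p : Fin 4 × Fin 4 => if p.1 = p.2 then X p.1 else 0) q with hp₀
  have hp0eval : ∀ d : Fin 4 → ℂ, eval d p₀ = P (diagonal d) := by
    intro d
    rw [hp₀, St10.eval_aeval', hq (diagonal d)]
    refine St10.eval_congr' q fun p => ?_
    rcases eq_or_ne p.1 p.2 with h | h
    · rw [if_pos h, eval_X, Matrix.diagonal_apply, if_pos h]
    · rw [if_neg h, map_zero, Matrix.diagonal_apply_ne _ h]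
  have hsymmP : ∀ (dd : Fin 4 → ℂ) (σ : Equiv.Perm (Fin 4)),
      P (diagonal (dd ∘ σ)) = P (diagonal dd) := by
    intro dd σ
    obtain ⟨g, hg1, hg2, hg3⟩ := St10.perm_exists σ
    rw [← hg3 dd]
    exact hinv (diagonal dd) g (diagonal_transpose dd) hg1 hg2
  have hp0symm : p₀.IsSymmetric := by
    intro σ
    apply MvPolynomial.funext
    intro x
    rw [eval_rename, hp0eval, hp0eval]
    exact hsymmP x σ
  obtain ⟨Q, hQ⟩ := St10.symm_eq_aeval_psum hp0symm
  have key : ∀ d : Fin 4 → ℂ,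
      P (diagonal d) = eval (fun i : Fin 4 => ∑ j, d j ^ ((i : ℕ) + 1)) Q := by
    intro d
    rw [← hp0eval d, hQ, St10.eval_aeval']
    refine St10.eval_congr' Q fun i => ?_
    simp [MvPolynomial.psum]
  -- good matrices
  have main_at : ∀ (M : Matrix (Fin 4) (Fin 4) ℂ) (lam : Fin 4 → ℂ), Mᵀ = M →
      Function.Injective lam →
      (∀ i, ((lam i) • (1 : Matrix (Fin 4) (Fin 4) ℂ) - M).det = 0) →
      P M = eval ![M.trace, (M ^ 2).trace, (M ^ 3).trace, (M ^ 4).trace] Q := by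
    intro M lam hM hinjl heig
    obtain ⟨g, hg1, hg2, hg3⟩ := St10.diag_of_symm hM lam hinjl heig
    have hggt : g * gᵀ = 1 := mul_eq_one_comm.mp hg1
    have hPM : P M = P (diagonal lam) := by
      rw [hg3]; exact hinv (diagonal lam) g (diagonal_transpose lam) hg1 hg2
    have htr : ∀ k : ℕ, (M ^ k).trace = ∑ j, lam j ^ k := by
      intro k
      have hMk : M ^ k = g * (diagonal lam) ^ k * gᵀ := by
        induction k with
        | zero => rw [pow_zero, pow_zero, mul_one, hggt]
        | succ n ihn =>
          rw [pow_succ, pow_succ, ihn]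
          conv_lhs => rw [hg3]
          simp only [mul_assoc]
          rw [← mul_assoc gᵀ g, hg1, one_mul]
      rw [hMk, Matrix.trace_mul_cycle, hg1, one_mul, diagonal_pow, trace_diagonal]
      simp [Pi.pow_apply]
    have h1 := htr 1; rw [pow_one] at h1
    have h2 := htr 2
    have h3 := htr 3
    have h4 := htr 4
    rw [hPM, key lam]
    refine St10.eval_congr' Q fun i => ?_
    fin_cases i <;> simp [h1, h2, h3, h4]
  -- generic symmetric matrix
  set N : Matrix (Fin 4) (Fin 4) (MvPolynomial (Fin 4 × Fin 4) ℂ) :=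
    Matrix.of (fun i j => X (i, j) + X (j, i)) with hN
  set Msym : (Fin 4 × Fin 4 → ℂ) → Matrix (Fin 4) (Fin 4) ℂ :=
    fun x => Matrix.of (fun i j => x (i, j) + x (j, i)) with hMsym
  have hMsymT : ∀ x, (Msym x)ᵀ = Msym x := by
    intro x; ext i j; simp [hMsym, add_comm]
  have hNmap : ∀ x : Fin 4 × Fin 4 → ℂ, N.map (eval x) = Msym x := by
    intro x; ext i j; simp [hN, hMsym]
  have htrmap : ∀ (x : Fin 4 × Fin 4 → ℂ) (k : ℕ),
      eval x ((N ^ k).trace) = ((Msym x) ^ k).trace := by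
    intro x k
    calc eval x ((N ^ k).trace) = ((N ^ k).map (eval x)).trace := by
          simp [Matrix.trace, Matrix.diag, map_sum, Matrix.map_apply]
      _ = (((eval x).mapMatrix (N ^ k) : Matrix (Fin 4) (Fin 4) ℂ)).trace := rfl
      _ = ((((eval x).mapMatrix N : Matrix (Fin 4) (Fin 4) ℂ)) ^ k).trace := by
          rw [map_pow]
      _ = ((Msym x) ^ k).trace := by rw [RingHom.mapMatrix_apply, hNmap]
  -- the discriminant-like polynomial
  set Vp : MvPolynomial (Fin 4) ℂ := ∏ p ∈ Finset.univ.offDiag, (X p.1 - X p.2) with hVp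
  have hVsymm : Vp.IsSymmetric := by
    intro σ
    rw [hVp, map_prod]
    simp only [map_sub, rename_X]
    refine Finset.prod_equiv (Equiv.prodCongr σ σ) ?_ ?_
    · intro p
      simp [Finset.mem_offDiag, σ.injective.ne_iff]
    · intro p _
      rfl
  obtain ⟨Qe, hQe⟩ := St10.symm_eq_aeval_esymm hVsymm
  set cf : Fin 4 → MvPolynomial (Fin 4 × Fin 4) ℂ :=
    fun i => (-1) ^ ((i : ℕ) + 1) * (N.charpoly).coeff (3 - (i : ℕ)) with hcf
  set Dp := aeval cf Qe with hDp
  have hKEY : ∀ (x : Fin 4 × Fin 4 → ℂ) (lam : Fin 4 → ℂ),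
      (Msym x).charpoly.roots = Multiset.map lam Finset.univ.val →
      eval x Dp = eval lam Vp := by
    intro x lam hroots
    have hcard : Multiset.card (Msym x).charpoly.roots = 4 := by
      rw [hroots]; simp
    have hprod : ((Msym x).charpoly.roots.map
          (fun t => Polynomial.X - Polynomial.C t)).prod = (Msym x).charpoly :=
      Polynomial.prod_multiset_X_sub_C_of_monic_of_roots_card_eq
        (Matrix.charpoly_monic _)
        (by rw [hcard, Matrix.charpoly_natDegree_eq_dim]; simp)
    have hcoeff : ∀ i : Fin 4,
        eval x (cf i) = (Msym x).charpoly.roots.esymm ((i : ℕ) + 1) := by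
      intro i
      have hi3 : (i : ℕ) ≤ 3 := by omega
      rw [hcf]
      simp only [_root_.map_mul, _root_.map_pow, _root_.map_neg, _root_.map_one]
      have hcm : eval x ((N.charpoly).coeff (3 - (i : ℕ)))
          = ((Msym x).charpoly).coeff (3 - (i : ℕ)) := by
        rw [← hNmap x, Matrix.charpoly_map, Polynomial.coeff_map]
      have harith : 4 - (3 - (i : ℕ)) = (i : ℕ) + 1 := by omega
      rw [hcm]
      conv_lhs => rw [← hprod]
      rw [Multiset.prod_X_sub_C_coeff _ (by rw [hcard]; omega), hcard, harith,
        ← mul_assoc, ← pow_add, Even.neg_one_pow ⟨(i : ℕ) + 1, by ring⟩, one_mul]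
    rw [hDp, St10.eval_aeval']
    have hfun : (fun i => eval x (cf i))
        = fun i : Fin 4 => eval lam (esymm (Fin 4) ℂ ((i : ℕ) + 1)) := by
      funext i
      rw [hcoeff i, ← St10.aeval_eq_eval', aeval_esymm_eq_multiset_esymm, ← hroots]
    rw [hfun, ← St10.eval_aeval', ← hQe]
  have hDpne : Dp ≠ 0 := by
    intro h0
    set d0 : Fin 4 → ℂ := ![0, 1, 2, 3] with hd0
    set x0 : Fin 4 × Fin 4 → ℂ := fun p => if p.1 = p.2 then d0 p.1 / 2 else 0 with hx0
    have hM0 : Msym x0 = diagonal d0 := by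
      ext i j
      rcases eq_or_ne i j with rfl | h
      · simp [hMsym, hx0, Matrix.diagonal_apply_eq]
      · simp [hMsym, hx0, Matrix.diagonal_apply_ne _ h, h, Ne.symm h]
    have hroots0 : (Msym x0).charpoly.roots = Multiset.map d0 Finset.univ.val := by
      rw [hM0, St10.charpoly_diagonal]
      have hp : ∏ i, (Polynomial.X - Polynomial.C (d0 i))
          = ((Finset.univ.val.map d0).map (fun a => Polynomial.X - Polynomial.C a)).prod := by
        rw [Multiset.map_map]
        rfl
      rw [hp, Polynomial.roots_multiset_prod_X_sub_C]
    have hz := hKEY x0 d0 hroots0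
    rw [h0, _root_.map_zero] at hz
    have hinj0 : Function.Injective d0 := by
      intro a b hab
      fin_cases a <;> fin_cases b <;> first | rfl | (exfalso; norm_num [hd0] at hab)
    have hne : eval d0 Vp ≠ 0 := by
      rw [hVp]
      simp only [map_prod, map_sub, eval_X]
      rw [Finset.prod_ne_zero_iff]
      intro p hp
      rw [Finset.mem_offDiag] at hp
      exact sub_ne_zero.mpr fun h => hp.2.2 (hinj0 h)
    exact hne hz.symm
  set F := aeval (fun p : Fin 4 × Fin 4 => N p.1 p.2) q
    - aeval (fun i : Fin 4 => (N ^ ((i : ℕ) + 1)).trace) Q with hF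
  have hFeval : ∀ x : Fin 4 × Fin 4 → ℂ,
      eval x F = P (Msym x)
        - eval (fun i : Fin 4 => ((Msym x) ^ ((i : ℕ) + 1)).trace) Q := by
    intro x
    rw [hF, _root_.map_sub, St10.eval_aeval', St10.eval_aeval', hq (Msym x)]
    rw [St10.eval_congr' q (g := fun p : Fin 4 × Fin 4 => Msym x p.1 p.2)
      (fun p => by simp [hN, hMsym]),
      St10.eval_congr' Q (g := fun i : Fin 4 => ((Msym x) ^ ((i : ℕ) + 1)).trace)
      (fun i => htrmap x _)]
  have hgood : ∀ x, eval x Dp ≠ 0 → eval x F = 0 := by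
    intro x hx
    obtain ⟨lam, hroots⟩ := St10.roots_charpoly (Msym x)
    have hV := hKEY x lam hroots
    rw [hV] at hx
    have hinjl : Function.Injective lam := by
      intro a b hab
      by_contra hne
      rw [hVp] at hx
      simp only [map_prod, map_sub, eval_X] at hx
      rw [Finset.prod_ne_zero_iff] at hx
      have hmem : (a, b) ∈ Finset.univ.offDiag := by
        simp [Finset.mem_offDiag, hne]
      exact hx (a, b) hmem (by rw [hab, sub_self])
    have heig : ∀ i, ((lam i) • (1 : Matrix (Fin 4) (Fin 4) ℂ) - Msym x).det = 0 := by
      intro i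
      rw [← St10.eval_charpoly]
      apply Polynomial.isRoot_of_mem_roots
      rw [hroots]
      exact Multiset.mem_map.mpr ⟨i, by simp, rfl⟩
    have hmain := main_at (Msym x) lam (hMsymT x) hinjl heig
    rw [hFeval x, hmain, sub_eq_zero]
    refine St10.eval_congr' Q fun i => ?_
    fin_cases i <;> simp
  have hFD : F * Dp = 0 := by
    apply MvPolynomial.funext
    intro x
    rw [_root_.map_mul, _root_.map_zero]
    rcases eq_or_ne (eval x Dp) 0 with h | h
    · rw [h, mul_zero]
    · rw [hgood x h, zero_mul]
  have hF0 : F = 0 := by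
    rcases mul_eq_zero.mp hFD with h | h
    · exact h
    · exact absurd h hDpne
  refine ⟨Q, ?_⟩
  intro Xm hXm
  set x : Fin 4 × Fin 4 → ℂ := fun p => Xm p.1 p.2 / 2 with hx
  have hMx : Msym x = Xm := by
    ext i j
    have h := congrFun (congrFun hXm j) i
    rw [transpose_apply] at h
    simp only [hMsym, hx, Matrix.of_apply]
    rw [h]
    ring
  have hFx : eval x F = 0 := by rw [hF0, _root_.map_zero]
  rw [hFeval x, hMx, sub_eq_zero] at hFx
  rw [hFx]
  refine St10.eval_congr' Q fun i => ?_
  fin_cases i <;> simp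
end
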